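/- Let $b \in L^1_{loc}(\mathbb{C})$ and let $f \geq 0$ be measurable. Then $C_b f(x) \leq 16 \sum_{t \in \{0,1/3\}^2} C_b^{\mathcal{D}^t} f(x)$ for all $x$, where the sum runs over the four shifted dyadic grids in $\mathbb{R}^2 \cong \mathbb{C}$. -/

import Mathlib

open MeasureTheory ENNReal Set

noncomputable section

/-- The (positive) commutator of the Cauchy transform,
`C_b f(z) = ∫_ℂ (|b(z)-b(ζ)| / |z-ζ|) f(ζ) dA(ζ)`, for `f ≥ 0`. -/
def cauchyCommAbs (b : ℂ → ℂ) (f : ℂ → ℝ≥0∞) (z : ℂ) : ℝ≥0∞ :=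
  ∫⁻ w, (ENNReal.ofReal ‖b z - b w‖ / ENNReal.ofReal ‖z - w‖) * f w

/-- The cube `2^k([0,1)^2 + m + (-1)^k t)` of the shifted dyadic grid `𝒟^t` in `ℂ ≅ ℝ²`. -/
def cplxCube (t : ℝ × ℝ) (k : ℤ) (m : ℤ × ℤ) : Set ℂ :=
  {z | ((2 : ℝ) ^ k * (m.1 + (-1 : ℝ) ^ k * t.1) ≤ z.re ∧
          z.re < (2 : ℝ) ^ k * (m.1 + (-1 : ℝ) ^ k * t.1 + 1)) ∧
       ((2 : ℝ) ^ k * (m.2 + (-1 : ℝ) ^ k * t.2) ≤ z.im ∧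
          z.im < (2 : ℝ) ^ k * (m.2 + (-1 : ℝ) ^ k * t.2 + 1))}

/-- The dyadic commutator
`C_b^{𝒟^t} f(x) = ∑_{Q ∈ 𝒟^t} (|Q|^{1/2} ⨍_Q |b(x)-b(y)| f(y) dy) χ_Q(x)`. -/
def dyadicCauchyComm (b : ℂ → ℂ) (t : ℝ × ℝ) (f : ℂ → ℝ≥0∞) (x : ℂ) : ℝ≥0∞ :=
  ∑' (k : ℤ) (m : ℤ × ℤ),
    (cplxCube t k m).indicator (fun x' =>
      (volume (cplxCube t k m)) ^ ((1 : ℝ) / 2) *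
        ((volume (cplxCube t k m))⁻¹ *
          ∫⁻ y in cplxCube t k m, ENNReal.ofReal ‖b x' - b y‖ * f y)) x



lemma cplxCube_eq (t : ℝ × ℝ) (k : ℤ) (m : ℤ × ℤ) :
    cplxCube t k m = Complex.measurableEquivRealProd ⁻¹'
      (Ico ((2 : ℝ) ^ k * (m.1 + (-1 : ℝ) ^ k * t.1)) ((2 : ℝ) ^ k * (m.1 + (-1 : ℝ) ^ k * t.1 + 1)) ×ˢ
       Ico ((2 : ℝ) ^ k * (m.2 + (-1 : ℝ) ^ k * t.2)) ((2 : ℝ) ^ k * (m.2 + (-1 : ℝ) ^ k * t.2 + 1))) := by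
  ext z
  simp [cplxCube, Complex.measurableEquivRealProd_apply, and_assoc]

lemma measurableSet_cplxCube (t : ℝ × ℝ) (k : ℤ) (m : ℤ × ℤ) :
    MeasurableSet (cplxCube t k m) := by
  rw [cplxCube_eq]
  exact (measurableSet_Ico.prod measurableSet_Ico).preimage
    Complex.measurableEquivRealProd.measurable

lemma volume_cplxCube (t : ℝ × ℝ) (k : ℤ) (m : ℤ × ℤ) :
    volume (cplxCube t k m) = ENNReal.ofReal ((2:ℝ)^k) * ENNReal.ofReal ((2:ℝ)^k) := by
  rw [cplxCube_eq, Complex.volume_preserving_equiv_real_prod.measure_preimage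
    ((measurableSet_Ico.prod measurableSet_Ico).nullMeasurableSet)]
  rw [Measure.volume_eq_prod, Measure.prod_prod, Real.volume_Ico, Real.volume_Ico]
  ring_nf

lemma oneThird (u ε σ : ℝ) (hσ : σ = 1 ∨ σ = -1) (hε0 : 0 < ε) (hε : ε ≤ 1/8) :
    ∃ t : ℝ, (t = 0 ∨ t = 1/3) ∧ ∃ m : ℤ, (m : ℝ) + σ * t + ε ≤ u ∧ u + ε < (m : ℝ) + σ * t + 1 := by
  have h0 : (0:ℝ) ≤ u - ⌊u⌋ := by have := Int.floor_le u; linarith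
  have h1 : u - ⌊u⌋ < 1 := by have := Int.lt_floor_add_one u; linarith
  by_cases hc : ε ≤ u - ⌊u⌋ ∧ u - ⌊u⌋ + ε < 1
  · exact ⟨0, Or.inl rfl, ⌊u⌋, by constructor <;> (rw [mul_zero]; linarith [hc.1, hc.2])⟩
  · push_neg at hc
    refine ⟨1/3, Or.inr rfl, ?_⟩
    rcases hσ with h | h <;> subst h
    · by_cases h2 : u - ⌊u⌋ < ε
      · exact ⟨⌊u⌋ - 1, by push_cast; constructor <;> linarith⟩
      · have h3 := hc (by linarith)
        exact ⟨⌊u⌋, by constructor <;> linarith⟩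
    · by_cases h2 : u - ⌊u⌋ < ε
      · exact ⟨⌊u⌋, by constructor <;> linarith⟩
      · have h3 := hc (by linarith)
        exact ⟨⌊u⌋ + 1, by push_cast; constructor <;> linarith⟩

lemma exists_cube (x w : ℂ) (hxw : w ≠ x) :
    ∃ t : ℝ × ℝ, (t.1 = 0 ∨ t.1 = 1/3) ∧ (t.2 = 0 ∨ t.2 = 1/3) ∧ ∃ (k : ℤ) (m : ℤ × ℤ),
      x ∈ cplxCube t k m ∧ w ∈ cplxCube t k m ∧ (2:ℝ)^k ≤ 16 * ‖x - w‖ := by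
  set r : ℝ := ‖x - w‖ with hr
  have hr0 : 0 < r := norm_pos_iff.2 (sub_ne_zero.2 (Ne.symm hxw))
  obtain ⟨n, hn1, hn2⟩ := exists_mem_Ico_zpow (x := 8 * r) (y := (2:ℝ)) (by positivity) one_lt_two
  set k : ℤ := n + 1 with hk
  have h2k : (0:ℝ) < 2 ^ k := zpow_pos two_pos k
  have hklt : 8 * r < 2 ^ k := hn2
  have hkle : (2:ℝ) ^ k ≤ 16 * r := by
    have : (2:ℝ) ^ k = 2 * 2 ^ n := by rw [hk, zpow_add_one₀ (two_ne_zero)]; ring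
    rw [this]; nlinarith [hn1]
  set ε : ℝ := r / 2 ^ k with hε
  have hε0 : 0 < ε := div_pos hr0 h2k
  have hε8 : ε ≤ 1 / 8 := by
    rw [hε, div_le_div_iff₀ h2k (by norm_num)]; linarith
  set σ : ℝ := (-1 : ℝ) ^ k with hσdef
  have hσ : σ = 1 ∨ σ = -1 := by
    rcases Int.even_or_odd k with h | h
    exacts [Or.inl (h.neg_one_zpow), Or.inr (h.neg_one_zpow)]
  obtain ⟨t1, ht1, m1, hm1a, hm1b⟩ := oneThird (x.re / 2 ^ k) ε σ hσ hε0 hε8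
  obtain ⟨t2, ht2, m2, hm2a, hm2b⟩ := oneThird (x.im / 2 ^ k) ε σ hσ hε0 hε8
  refine ⟨(t1, t2), ht1, ht2, k, (m1, m2), ?_, ?_, hkle⟩
  · -- x ∈ cube
    constructor
    · constructor
      · have := (le_div_iff₀ h2k).1 (by linarith : ((m1:ℝ) + σ * t1) ≤ x.re / 2 ^ k)
        simpa [mul_comm] using this
      · have := (div_lt_iff₀ h2k).1 (by linarith : x.re / 2 ^ k < (m1:ℝ) + σ * t1 + 1)
        simpa [mul_comm] using this
    · constructor
      · have := (le_div_iff₀ h2k).1 (by linarith : ((m2:ℝ) + σ * t2) ≤ x.im / 2 ^ k)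
        simpa [mul_comm] using this
      · have := (div_lt_iff₀ h2k).1 (by linarith : x.im / 2 ^ k < (m2:ℝ) + σ * t2 + 1)
        simpa [mul_comm] using this
  · -- w ∈ cube
    have hre : |x.re - w.re| ≤ r := by
      have := Complex.abs_re_le_norm (x - w)
      simpa [Complex.sub_re] using this
    have him : |x.im - w.im| ≤ r := by
      have := Complex.abs_im_le_norm (x - w)
      simpa [Complex.sub_im] using this
    have hre1 := abs_le.1 hre
    have him1 := abs_le.1 him
    have hεr : ε * 2 ^ k = r := div_mul_cancel₀ r (ne_of_gt h2k)
    have key1a : 2 ^ k * ((m1:ℝ) + σ * t1) ≤ x.re - r := by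
      have h := (le_div_iff₀ h2k).1 hm1a
      have hx : ((m1:ℝ) + σ * t1 + ε) * 2 ^ k = 2 ^ k * ((m1:ℝ) + σ * t1) + r := by
        rw [← hεr]; ring
      linarith
    have key1b : x.re + r < 2 ^ k * ((m1:ℝ) + σ * t1 + 1) := by
      have h := (div_lt_iff₀ h2k).1 (show x.re / 2 ^ k < ((m1:ℝ) + σ * t1 + 1 - ε) by linarith)
      have hx : ((m1:ℝ) + σ * t1 + 1 - ε) * 2 ^ k = 2 ^ k * ((m1:ℝ) + σ * t1 + 1) - r := by
        rw [← hεr]; ring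
      linarith
    have key2a : 2 ^ k * ((m2:ℝ) + σ * t2) ≤ x.im - r := by
      have h := (le_div_iff₀ h2k).1 hm2a
      have hx : ((m2:ℝ) + σ * t2 + ε) * 2 ^ k = 2 ^ k * ((m2:ℝ) + σ * t2) + r := by
        rw [← hεr]; ring
      linarith
    have key2b : x.im + r < 2 ^ k * ((m2:ℝ) + σ * t2 + 1) := by
      have h := (div_lt_iff₀ h2k).1 (show x.im / 2 ^ k < ((m2:ℝ) + σ * t2 + 1 - ε) by linarith)
      have hx : ((m2:ℝ) + σ * t2 + 1 - ε) * 2 ^ k = 2 ^ k * ((m2:ℝ) + σ * t2 + 1) - r := by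
        rw [← hεr]; ring
      linarith
    exact ⟨⟨by linarith [hre1.2], by linarith [hre1.1]⟩,
           ⟨by linarith [him1.2], by linarith [him1.1]⟩⟩

lemma cst_cplxCube (t : ℝ × ℝ) (k : ℤ) (m : ℤ × ℤ) :
    (volume (cplxCube t k m)) ^ ((1 : ℝ) / 2) * (volume (cplxCube t k m))⁻¹ =
      (ENNReal.ofReal ((2:ℝ)^k))⁻¹ := by
  set p : ℝ≥0∞ := ENNReal.ofReal ((2:ℝ)^k) with hp
  have hp0 : p ≠ 0 := by
    rw [hp]
    exact (ENNReal.ofReal_pos.2 (zpow_pos two_pos k)).ne'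
  have hpt : p ≠ ⊤ := ENNReal.ofReal_ne_top
  have hv : volume (cplxCube t k m) = p * p := volume_cplxCube t k m
  rw [hv]
  have h1 : (p * p) ^ ((1 : ℝ) / 2) = p := by
    rw [← sq, ← ENNReal.rpow_natCast p 2, ← ENNReal.rpow_mul]
    norm_num
  rw [h1, ENNReal.mul_inv (Or.inl hp0) (Or.inl hpt), ← mul_assoc,
    ENNReal.mul_inv_cancel hp0 hpt, one_mul]

/-- The commutator of the Cauchy transform is pointwise dominated by `16` times the sum
of the four shifted dyadic commutators. -/
theorem cauchyComm_le_sum_dyadic (b : ℂ → ℂ) (hb : LocallyIntegrable b volume)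
    (f : ℂ → ℝ≥0∞) (hf : Measurable f) (x : ℂ) :
    cauchyCommAbs b f x ≤
      16 * ∑ t ∈ (({0, 1 / 3} : Finset ℝ) ×ˢ ({0, 1 / 3} : Finset ℝ)),
        dyadicCauchyComm b t f x := by
  classical
  set S : Finset (ℝ × ℝ) := ({0, 1 / 3} : Finset ℝ) ×ˢ ({0, 1 / 3} : Finset ℝ) with hS
  set h : ℂ → ℝ≥0∞ := fun y => ENNReal.ofReal ‖b x - b y‖ * f y with hh
  have hbm : AEMeasurable b volume := hb.aestronglyMeasurable.aemeasurable
  have hhm : AEMeasurable h volume :=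
    ((aemeasurable_const.sub hbm).norm.ennreal_ofReal).mul hf.aemeasurable
  set F : (ℝ × ℝ) → ℤ → (ℤ × ℤ) → ℂ → ℝ≥0∞ := fun t k m w =>
    (cplxCube t k m).indicator
      (fun _ => 16 * ((volume (cplxCube t k m)) ^ ((1 : ℝ) / 2) * (volume (cplxCube t k m))⁻¹)) x *
      (cplxCube t k m).indicator h w with hF
  -- Step 1 : pointwise domination of the kernel
  have step1 : ∀ w, (ENNReal.ofReal ‖b x - b w‖ / ENNReal.ofReal ‖x - w‖) * f w ≤
      ∑ t ∈ S, ∑' (k : ℤ) (m : ℤ × ℤ), F t k m w := by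
    intro w
    by_cases hw : w = x
    · subst hw
      simp [sub_self]
    · obtain ⟨t, ht1, ht2, k, m, hxm, hwm, hkle⟩ := exists_cube x w hw
      have hr0 : 0 < ‖x - w‖ := norm_pos_iff.2 (sub_ne_zero.2 (fun hc => hw hc.symm))
      have hterm : (ENNReal.ofReal ‖b x - b w‖ / ENNReal.ofReal ‖x - w‖) * f w ≤ F t k m w := by
        rw [hF]
        simp only [indicator_of_mem hxm, indicator_of_mem hwm, hh, cst_cplxCube]
        have hle : (ENNReal.ofReal ‖x - w‖)⁻¹ ≤ 16 * (ENNReal.ofReal ((2:ℝ)^k))⁻¹ := by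
          have h1 : ENNReal.ofReal ((2:ℝ)^k) ≤ 16 * ENNReal.ofReal ‖x - w‖ := by
            calc ENNReal.ofReal ((2:ℝ)^k) ≤ ENNReal.ofReal (16 * ‖x - w‖) :=
                  ENNReal.ofReal_le_ofReal hkle
              _ = 16 * ENNReal.ofReal ‖x - w‖ := by
                  rw [ENNReal.ofReal_mul (by norm_num)]
                  norm_num
          calc (ENNReal.ofReal ‖x - w‖)⁻¹
              = 16 * (16 * ENNReal.ofReal ‖x - w‖)⁻¹ := by
                rw [ENNReal.mul_inv (Or.inl (by norm_num)) (Or.inl (by norm_num)), ← mul_assoc,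
                  ENNReal.mul_inv_cancel (by norm_num) (by norm_num), one_mul]
            _ ≤ 16 * (ENNReal.ofReal ((2:ℝ)^k))⁻¹ :=
                mul_le_mul_right (ENNReal.inv_le_inv.2 h1) 16
        calc ENNReal.ofReal ‖b x - b w‖ / ENNReal.ofReal ‖x - w‖ * f w
            = (ENNReal.ofReal ‖x - w‖)⁻¹ * (ENNReal.ofReal ‖b x - b w‖ * f w) := by
              rw [div_eq_mul_inv]; ring
          _ ≤ (16 * (ENNReal.ofReal ((2:ℝ)^k))⁻¹) * (ENNReal.ofReal ‖b x - b w‖ * f w) :=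
              mul_le_mul_left hle _
      have h2 : F t k m w ≤ ∑' (m' : ℤ × ℤ), F t k m' w := ENNReal.le_tsum m
      have h3 : ∑' (m' : ℤ × ℤ), F t k m' w ≤ ∑' (k' : ℤ) (m' : ℤ × ℤ), F t k' m' w :=
        ENNReal.le_tsum (f := fun k' => ∑' (m' : ℤ × ℤ), F t k' m' w) k
      have htS : t ∈ S := by
        rw [hS, Finset.mem_product]
        constructor <;> simp only [Finset.mem_insert, Finset.mem_singleton] <;> tauto
      have h4 : ∑' (k' : ℤ) (m' : ℤ × ℤ), F t k' m' w ≤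
          ∑ t ∈ S, ∑' (k : ℤ) (m : ℤ × ℤ), F t k m w :=
        Finset.single_le_sum (f := fun t => ∑' (k : ℤ) (m : ℤ × ℤ), F t k m w) (fun _ _ => zero_le) htS
      exact le_trans hterm (le_trans h2 (le_trans h3 h4))
  -- Step 2 : integrate
  have step2 : cauchyCommAbs b f x ≤ ∫⁻ w, ∑ t ∈ S, ∑' (k : ℤ) (m : ℤ × ℤ), F t k m w :=
    lintegral_mono step1
  have hFmeas : ∀ t k m, AEMeasurable (F t k m) volume := fun t k m =>
    (hhm.indicator (measurableSet_cplxCube t k m)).const_mul _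
  have hswap : (∫⁻ w, ∑ t ∈ S, ∑' (k : ℤ) (m : ℤ × ℤ), F t k m w) =
      ∑ t ∈ S, ∑' (k : ℤ) (m : ℤ × ℤ), ∫⁻ w, F t k m w := by
    rw [lintegral_finset_sum' S
      (fun t _ => AEMeasurable.ennreal_tsum (fun k => AEMeasurable.ennreal_tsum (fun m => hFmeas t k m)))]
    refine Finset.sum_congr rfl (fun t _ => ?_)
    rw [lintegral_tsum (fun k => AEMeasurable.ennreal_tsum (fun m => hFmeas t k m))]
    exact tsum_congr (fun k => lintegral_tsum (fun m => hFmeas t k m))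
  have hint : ∀ t k m, (∫⁻ w, F t k m w) =
      16 * (cplxCube t k m).indicator (fun x' =>
        (volume (cplxCube t k m)) ^ ((1 : ℝ) / 2) *
          ((volume (cplxCube t k m))⁻¹ *
            ∫⁻ y in cplxCube t k m, ENNReal.ofReal ‖b x' - b y‖ * f y)) x := by
    intro t k m
    rw [hF]
    simp only
    rw [lintegral_const_mul'' _ (hhm.indicator (measurableSet_cplxCube t k m)),
      lintegral_indicator (measurableSet_cplxCube t k m)]
    by_cases hx : x ∈ cplxCube t k m
    · rw [indicator_of_mem hx, indicator_of_mem hx, hh]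
      ring
    · rw [indicator_of_notMem hx, indicator_of_notMem hx, zero_mul, mul_zero]
  calc cauchyCommAbs b f x ≤ ∑ t ∈ S, ∑' (k : ℤ) (m : ℤ × ℤ), ∫⁻ w, F t k m w := by
        rw [← hswap]; exact step2
    _ = 16 * ∑ t ∈ S, dyadicCauchyComm b t f x := by
        rw [Finset.mul_sum]
        refine Finset.sum_congr rfl (fun t _ => ?_)
        rw [dyadicCauchyComm, ← ENNReal.tsum_mul_left]
        refine tsum_congr (fun k => ?_)
        rw [← ENNReal.tsum_mul_left]
        exact tsum_congr (fun m => hint t k m)
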